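/- If y is a polynomial of degree ≤ 5, then for all t and Δt: y(t+Δt) − y(t) = Δt((2/5)y'(t) + (3/5)y'(t+Δt)) + Δt²((1/20)y''(t) − (3/20)y''(t+Δt)) + Δt³((1/60)y'''(t+Δt)). -/

import Mathlib

open Polynomial Finset

private def P12 (t Δt : ℝ) (p : Polynomial ℝ) : Prop :=
    p.eval (t + Δt) - p.eval t =
      Δt * ((2/5) * p.derivative.eval t + (3/5) * p.derivative.eval (t + Δt)) +
      Δt^2 * ((1/20) * p.derivative.derivative.eval t
        - (3/20) * p.derivative.derivative.eval (t + Δt)) +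
      Δt^3 * ((1/60) * p.derivative.derivative.derivative.eval (t + Δt))

private lemma P12_add (t Δt : ℝ) {p q : Polynomial ℝ} (hp : P12 t Δt p) (hq : P12 t Δt q) :
    P12 t Δt (p + q) := by
  unfold P12 at *
  simp only [map_add, eval_add]
  linarith

private lemma P12_monomial (t Δt : ℝ) (i : ℕ) (hi : i < 6) (c : ℝ) :
    P12 t Δt (monomial i c) := by
  unfold P12
  interval_cases i <;>
    simp [derivative_monomial, eval_monomial] <;> ring

theorem stmt_12 (p : Polynomial ℝ) (hp : p.degree ≤ 5) (t Δt : ℝ) :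
    p.eval (t + Δt) - p.eval t =
      Δt * ((2/5) * p.derivative.eval t + (3/5) * p.derivative.eval (t + Δt)) +
      Δt^2 * ((1/20) * p.derivative.derivative.eval t
        - (3/20) * p.derivative.derivative.eval (t + Δt)) +
      Δt^3 * ((1/60) * p.derivative.derivative.derivative.eval (t + Δt)) := by
  have hnd : p.natDegree < 6 := by
    exact Nat.lt_succ_of_le (Polynomial.natDegree_le_iff_degree_le.mpr hp)
  have hrep := Polynomial.as_sum_range' p 6 hnd
  have : P12 t Δt p := by
    rw [hrep]
    have : ∀ s : Finset ℕ, (∀ i ∈ s, i < 6) →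
        P12 t Δt (∑ i ∈ s, monomial i (p.coeff i)) := by
      intro s
      induction s using Finset.induction_on with
      | empty => intro _; unfold P12; simp
      | insert _ _ hx ih =>
        intro h
        rw [Finset.sum_insert hx]
        exact P12_add t Δt (P12_monomial t Δt _ (h _ (Finset.mem_insert_self _ _)) _)
          (ih fun i hi => h i (Finset.mem_insert_of_mem hi))
    exact this (range 6) (fun i hi => Finset.mem_range.mp hi)
  exact this
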